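/- Let f : [0,1] → ℝ be continuous and positive such that t ↦ (1−t)/f(t) is nonincreasing on [0,1], and let F(x) = ∫₀ˣ (1−t)/f(t) dt. Let X be a finite index set with nonnegative weights w_u ≥ 0 for u ∈ X, let w_v ≥ 0, let y ∈ [0,1], and for each u ∈ X let y_u ∈ [0,1] with y_u ≤ y. If Σ_{u∈X} w_u (y − y_u) = w_v · f(y), then w_v (1 − y) ≤ Σ_{u∈X} w_u (F(y) − F(y_u)). -/

import Mathlib

/-- Weighted charging lemma: if `f` is continuous and positive on `[0,1]`,
`t ↦ (1-t)/f t` is nonincreasing on `[0,1]`, `F x = ∫₀ˣ (1-t)/f t dt`,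
weights `w_u ≥ 0` and `w_v ≥ 0`, and `Σ_{u ∈ X} w_u (y - y_u) = w_v · f y`
with all `y_u ≤ y` in `[0,1]`, then `w_v (1 - y) ≤ Σ_{u ∈ X} w_u (F y - F y_u)`. -/
theorem weighted_charging_lemma {ι : Type*} (f : ℝ → ℝ)
    (hfc : ContinuousOn f (Set.Icc 0 1))
    (hfpos : ∀ t ∈ Set.Icc (0:ℝ) 1, 0 < f t)
    (hmono : ∀ s ∈ Set.Icc (0:ℝ) 1, ∀ t ∈ Set.Icc (0:ℝ) 1,
      s ≤ t → (1 - t) / f t ≤ (1 - s) / f s)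
    (F : ℝ → ℝ) (hF : ∀ x, F x = ∫ t in (0:ℝ)..x, (1 - t) / f t)
    (X : Finset ι) (w : ι → ℝ) (hw : ∀ u ∈ X, 0 ≤ w u)
    (wv : ℝ) (hwv : 0 ≤ wv)
    (y : ℝ) (hy : y ∈ Set.Icc (0:ℝ) 1)
    (yu : ι → ℝ) (hyu : ∀ u ∈ X, yu u ∈ Set.Icc (0:ℝ) 1)
    (hle : ∀ u ∈ X, yu u ≤ y)
    (hsum : ∑ u ∈ X, w u * (y - yu u) = wv * f y) :
    wv * (1 - y) ≤ ∑ u ∈ X, w u * (F y - F (yu u)) := by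
  set g : ℝ → ℝ := fun t => (1 - t) / f t with hg
  have hgc : ContinuousOn g (Set.Icc 0 1) := by
    apply ContinuousOn.div (by fun_prop) hfc
    intro t ht; exact (hfpos t ht).ne'
  have hfy : 0 < f y := hfpos y hy
  -- key pointwise bound
  have key : ∀ u ∈ X, w u * (y - yu u) * g y ≤ w u * (F y - F (yu u)) := by
    intro u hu
    have hyuI := hyu u hu
    have hleu := hle u hu
    have hsub : Set.uIcc (yu u) y ⊆ Set.Icc (0:ℝ) 1 := by
      rw [Set.uIcc_of_le hleu]
      intro t ht
      exact ⟨le_trans hyuI.1 ht.1, le_trans ht.2 hy.2⟩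
    have hint : IntervalIntegrable g MeasureTheory.volume (yu u) y :=
      (hgc.mono hsub).intervalIntegrable
    have hdiff : F y - F (yu u) = ∫ t in (yu u)..y, g t := by
      rw [hF, hF]
      exact intervalIntegral.integral_interval_sub_left
        ((hgc.mono (by rw [Set.uIcc_of_le hy.1]; exact Set.Icc_subset_Icc_right hy.2)).intervalIntegrable)
        ((hgc.mono (by rw [Set.uIcc_of_le hyuI.1]; exact Set.Icc_subset_Icc le_rfl hyuI.2)).intervalIntegrable)
    have hlb : (y - yu u) * g y ≤ ∫ t in (yu u)..y, g t := by
      have : ∫ t in (yu u)..y, g y ≤ ∫ t in (yu u)..y, g t := by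
        apply intervalIntegral.integral_mono_on hleu intervalIntegrable_const hint
        intro t ht
        exact hmono t ⟨le_trans hyuI.1 ht.1, le_trans ht.2 hy.2⟩ y hy ht.2
      rwa [intervalIntegral.integral_const, smul_eq_mul] at this
    rw [hdiff, mul_assoc]
    exact mul_le_mul_of_nonneg_left hlb (hw u hu)
  calc wv * (1 - y) = wv * f y * g y := by
        simp only [hg]; field_simp
    _ = (∑ u ∈ X, w u * (y - yu u)) * g y := by rw [hsum]
    _ = ∑ u ∈ X, w u * (y - yu u) * g y := by rw [Finset.sum_mul]
    _ ≤ ∑ u ∈ X, w u * (F y - F (yu u)) := Finset.sum_le_sum key
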